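/- Let G = (μ,V,W,E,P,f,g) be a GCD graph with edge density δ > 0. Then there is a GCD subgraph G' = (μ,V',W',E',P',f',g') of G with edge density δ' > 0 such that P' ⊆ P ∪ (R(G) ∩ {p : p ≤ C₆}), R(G') ⊆ {p : p > C₆}, and q(G') ≥ q(G)/C₇. -/

import Mathlib

open Finset

/-- A (bipartite) GCD graph: a measure `μ` on `ℕ`, finite vertex sets `V, W` of positive
integers, an edge set `E ⊆ V × W`, a (finite) set of primes `P`, and exponent functions
`f, g` such that for every `p ∈ P`: `p^{f(p)} ∣ v` for all `v ∈ V`, `p^{g(p)} ∣ w` for all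
`w ∈ W`, and `p^{min(f(p),g(p))}` exactly divides `gcd(v, w)` for every edge `(v, w)`. -/
structure GCDGraph where
  mu : ℕ → ℝ
  mu_nonneg : ∀ n, 0 ≤ mu n
  V : Finset ℕ
  W : Finset ℕ
  V_pos : ∀ v ∈ V, 0 < v
  W_pos : ∀ w ∈ W, 0 < w
  E : Finset (ℕ × ℕ)
  E_sub : E ⊆ V ×ˢ W
  P : Finset ℕ
  P_prime : ∀ p ∈ P, p.Prime
  f : ℕ → ℕ
  g : ℕ → ℕ
  f_dvd : ∀ p ∈ P, ∀ v ∈ V, p ^ f p ∣ v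
  g_dvd : ∀ p ∈ P, ∀ w ∈ W, p ^ g p ∣ w
  gcd_exact : ∀ p ∈ P, ∀ e ∈ E,
    p ^ min (f p) (g p) ∣ Nat.gcd e.1 e.2 ∧ ¬ p ^ (min (f p) (g p) + 1) ∣ Nat.gcd e.1 e.2

namespace GCDGraph

/-- The measure of a finite set of integers: `μ(S) = ∑_{n ∈ S} μ(n)`. -/
noncomputable def muSet (mu : ℕ → ℝ) (S : Finset ℕ) : ℝ := ∑ n ∈ S, mu n

/-- The measure of a finite set of pairs: `μ(E) = ∑_{(n₁,n₂) ∈ E} μ(n₁) μ(n₂)`. -/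
noncomputable def muEdges (mu : ℕ → ℝ) (E : Finset (ℕ × ℕ)) : ℝ := ∑ e ∈ E, mu e.1 * mu e.2

/-- Edge density `δ = μ(E) / (μ(V) μ(W))` (equal to `0` when `μ(V) μ(W) = 0`,
by the Lean convention `x / 0 = 0`). -/
noncomputable def densityRaw (mu : ℕ → ℝ) (V W : Finset ℕ) (E : Finset (ℕ × ℕ)) : ℝ :=
  muEdges mu E / (muSet mu V * muSet mu W)

/-- The quality
`q = δ^{2+τ} μ(V) μ(W) ∏_{p ∈ P} p^{|f(p)-g(p)|} (1 - 1_{f(p)=g(p)≥1}/p)^{-2} (1 - p^{-1-τ/4})^{-3}`. -/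
noncomputable def qualityRaw (τ : ℝ) (mu : ℕ → ℝ) (V W : Finset ℕ) (E : Finset (ℕ × ℕ))
    (P : Finset ℕ) (f g : ℕ → ℕ) : ℝ :=
  densityRaw mu V W E ^ (2 + τ) * muSet mu V * muSet mu W *
    ∏ p ∈ P, ((p : ℝ) ^ (((f p : ℤ) - (g p : ℤ)).natAbs) *
      ((1 - (if f p = g p ∧ 1 ≤ f p then ((p : ℝ))⁻¹ else 0))⁻¹) ^ 2 *
      ((1 - (p : ℝ) ^ (-1 - τ / 4))⁻¹) ^ 3)

/-- The edge density of a GCD graph. -/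
noncomputable def density (G : GCDGraph) : ℝ := densityRaw G.mu G.V G.W G.E

/-- The quality of a GCD graph (with parameter `τ`). -/
noncomputable def quality (τ : ℝ) (G : GCDGraph) : ℝ :=
  qualityRaw τ G.mu G.V G.W G.E G.P G.f G.g

/-- `G'` is a GCD subgraph of `G`. -/
def IsSubgraph (G' G : GCDGraph) : Prop :=
  G'.mu = G.mu ∧ G'.V ⊆ G.V ∧ G'.W ⊆ G.W ∧ G'.E ⊆ G.E ∧ G.P ⊆ G'.P ∧
    (∀ p ∈ G.P, G'.f p = G.f p) ∧ (∀ p ∈ G.P, G'.g p = G.g p)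

/-- `G` is `(P,f,g)`-maximal: every GCD subgraph with the same multiplicative data has
quality at most `q(G)`. -/
def IsMaximal (τ : ℝ) (G : GCDGraph) : Prop :=
  ∀ G' : GCDGraph, IsSubgraph G' G → G'.P = G.P → quality τ G' ≤ quality τ G

/-- `R(G)`: the set of primes `p ∉ P` dividing `gcd(v,w)` for some edge `(v,w)`. -/
def R (G : GCDGraph) : Set ℕ :=
  {p | p.Prime ∧ p ∉ G.P ∧ ∃ e ∈ G.E, p ∣ Nat.gcd e.1 e.2}

/-- `S_{p^k}`: the subset of elements of `S` exactly divisible by `p^k`. -/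
def exactPart (S : Finset ℕ) (p k : ℕ) : Finset ℕ :=
  S.filter fun v => p ^ k ∣ v ∧ ¬ p ^ (k + 1) ∣ v

/-- `E_{p^k, p^ℓ} = E ∩ (V_{p^k} × W_{p^ℓ})`. -/
def edgesAt (G : GCDGraph) (p k l : ℕ) : Finset (ℕ × ℕ) :=
  G.E.filter fun e => e.1 ∈ exactPart G.V p k ∧ e.2 ∈ exactPart G.W p l

/-- The quality of the GCD subgraph `G_{p^k, p^ℓ}`, with vertex sets `V_{p^k}`, `W_{p^ℓ}`,
edges `E_{p^k,p^ℓ}`, prime set `P ∪ {p}` and `f, g` extended by `f(p) = k`, `g(p) = ℓ`. -/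
noncomputable def qualityAt (τ : ℝ) (G : GCDGraph) (p k l : ℕ) : ℝ :=
  qualityRaw τ G.mu (exactPart G.V p k) (exactPart G.W p l) (edgesAt G p k l)
    (insert p G.P) (Function.update G.f p k) (Function.update G.g p l)

noncomputable def C1 (τ : ℝ) : ℝ := 10 ^ 4 / τ
noncomputable def C2 (τ M : ℝ) : ℝ := 10 * M * C1 τ ^ 3
noncomputable def C3 (τ : ℝ) : ℝ := 10 ^ 3 * C1 τ ^ 3
noncomputable def C4 (τ M : ℝ) : ℝ := 10 ^ 10 * M ^ 2 * C2 τ M ^ 2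
noncomputable def C5 (τ M : ℝ) : ℝ := max (C3 τ) ((50 * Real.log (C4 τ M)) ^ 3)
noncomputable def C6 (τ M : ℝ) : ℝ :=
  max (C4 τ M) (max (10 ^ 4 * M * C2 τ M) (C2 τ M ^ (10 / τ)))
noncomputable def C7 (τ M : ℝ) : ℝ := C5 τ M ^ C6 τ M

/-- `R♯(G)`: those `p ∈ R(G)` admitting `k ≥ 0` with `μ(V_{p^k})/μ(V) ≥ 1 − C₂/p` and
`μ(W_{p^k})/μ(W) ≥ 1 − C₂/p`, and such that `q(G_{p^a,p^b}) < M q(G)` for all `a ≠ b`. -/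
def Rsharp (τ M : ℝ) (G : GCDGraph) : Set ℕ :=
  {p ∈ R G |
    (∃ k : ℕ, 1 - C2 τ M / (p : ℝ) ≤ muSet G.mu (exactPart G.V p k) / muSet G.mu G.V ∧
        1 - C2 τ M / (p : ℝ) ≤ muSet G.mu (exactPart G.W p k) / muSet G.mu G.W) ∧
    ∀ a b : ℕ, a ≠ b → qualityAt τ G p a b < M * quality τ G}

/-- `R♭(G) = R(G) \ R♯(G)`. -/
def Rflat (τ M : ℝ) (G : GCDGraph) : Set ℕ := R G \ Rsharp τ M G

/-- The neighbourhood `Γ_G(v) = {w ∈ W : (v,w) ∈ E}` of a left vertex. -/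
def nbhdOfV (G : GCDGraph) (v : ℕ) : Finset ℕ := G.W.filter fun w => (v, w) ∈ G.E

/-- The neighbourhood `Γ_G(w) = {v ∈ V : (v,w) ∈ E}` of a right vertex. -/
def nbhdOfW (G : GCDGraph) (w : ℕ) : Finset ℕ := G.V.filter fun v => (v, w) ∈ G.E

end GCDGraph

open GCDGraph


/-! ### Auxiliary lemmas -/

section Aux

open GCDGraph

lemma myGeomLe {r : ℝ} (h0 : 0 ≤ r) (h1 : r < 1) (n : ℕ) :
    ∑ j ∈ Finset.range n, r ^ j ≤ 1 / (1 - r) := by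
  rw [le_div_iff₀ (by linarith)]
  have hg := geom_sum_mul r n
  nlinarith [pow_nonneg h0 n]

lemma georow {r : ℝ} (h0 : 0 ≤ r) (h1 : r < 1) (k N : ℕ) :
    ∑ l ∈ Finset.range N, r ^ (((k : ℤ) - l).natAbs) ≤ 2 / (1 - r) := by
  rw [← Finset.sum_filter_add_sum_filter_not (Finset.range N) (fun l => l ≤ k)]
  have hA : ∑ l ∈ (Finset.range N).filter (fun l => l ≤ k), r ^ (((k : ℤ) - l).natAbs)
      ≤ 1 / (1 - r) := by
    calc ∑ l ∈ (Finset.range N).filter (fun l => l ≤ k), r ^ (((k : ℤ) - l).natAbs)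
        = ∑ l ∈ (Finset.range N).filter (fun l => l ≤ k), r ^ (k - l) := by
          refine Finset.sum_congr rfl fun l hl => ?_
          have hlk : l ≤ k := (Finset.mem_filter.1 hl).2
          congr 1
          omega
      _ ≤ ∑ l ∈ Finset.range (k + 1), r ^ (k - l) := by
          refine Finset.sum_le_sum_of_subset_of_nonneg ?_ fun i _ _ => pow_nonneg h0 _
          intro l hl
          have := (Finset.mem_filter.1 hl).2
          exact Finset.mem_range.2 (by omega)
      _ = ∑ j ∈ Finset.range (k + 1), r ^ j := by
          have := Finset.sum_range_reflect (fun j => r ^ j) (k + 1)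
          simpa using this
      _ ≤ 1 / (1 - r) := myGeomLe h0 h1 _
  have hB : ∑ l ∈ (Finset.range N).filter (fun l => ¬ l ≤ k), r ^ (((k : ℤ) - l).natAbs)
      ≤ 1 / (1 - r) := by
    calc ∑ l ∈ (Finset.range N).filter (fun l => ¬ l ≤ k), r ^ (((k : ℤ) - l).natAbs)
        = ∑ l ∈ (Finset.range N).filter (fun l => ¬ l ≤ k), r ^ (l - k) := by
          refine Finset.sum_congr rfl fun l hl => ?_
          have hlk : ¬ l ≤ k := (Finset.mem_filter.1 hl).2
          congr 1
          omega
      _ ≤ ∑ l ∈ Finset.Ico (k + 1) (k + 1 + N), r ^ (l - k) := by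
          refine Finset.sum_le_sum_of_subset_of_nonneg ?_ fun i _ _ => pow_nonneg h0 _
          intro l hl
          have h1' := Finset.mem_range.1 (Finset.mem_filter.1 hl).1
          have h2' := (Finset.mem_filter.1 hl).2
          exact Finset.mem_Ico.2 (by omega)
      _ = ∑ j ∈ Finset.range N, r ^ (k + 1 + j - k) := by
          rw [Finset.sum_Ico_eq_sum_range]
          simp
      _ ≤ ∑ j ∈ Finset.range N, r ^ j := by
          refine Finset.sum_le_sum fun j _ => ?_
          have : k + 1 + j - k = j + 1 := by omega
          rw [this]
          exact pow_le_pow_of_le_one h0 h1.le (by omega)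
      _ ≤ 1 / (1 - r) := myGeomLe h0 h1 _
  have : 1 / (1 - r) + 1 / (1 - r) = 2 / (1 - r) := by ring
  linarith

lemma pigeon {τ C₅ : ℝ} (hτ0 : 0 < τ) (hτ1 : τ ≤ 1) (hC5 : (1000 : ℝ) < C₅) (N : ℕ)
    (x : ℕ → ℕ → ℝ) (a b : ℕ → ℝ)
    (hx0 : ∀ k l, 0 ≤ x k l) (ha0 : ∀ k, 0 ≤ a k) (hb0 : ∀ l, 0 ≤ b l)
    (hpos : ∀ k l, 0 < x k l → 0 < a k ∧ 0 < b l)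
    (hxs : ∑ q ∈ Finset.range N ×ˢ Finset.range N, x q.1 q.2 = 1)
    (has : ∑ k ∈ Finset.range N, a k = 1)
    (hbs : ∑ l ∈ Finset.range N, b l = 1) :
    ∃ k l, 0 < x k l ∧
      1 / C₅ * (a k * b l) ^ (1 + τ) ≤ x k l ^ (2 + τ) * 2 ^ (((k : ℤ) - l).natAbs) := by
  by_contra hcon
  push_neg at hcon
  have hτ2 : (0 : ℝ) < 2 + τ := by linarith
  set θ : ℝ := 1 / (2 + τ) with hθ
  have hθpos : 0 < θ := by positivity
  have hθ3 : 1 / 3 ≤ θ := by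
    rw [hθ, div_le_div_iff₀ (by norm_num) hτ2]; linarith
  have hθinv : θ⁻¹ = 2 + τ := by rw [hθ, one_div, inv_inv]
  set s : ℝ := (1 + τ) * θ with hs
  have hspos : 0 < s := by positivity
  have hs2 : 1 ≤ s * 2 := by
    rw [hs, hθ]
    rw [show (1 + τ) * (1 / (2 + τ)) * 2 = (2 + 2 * τ) / (2 + τ) by ring]
    rw [le_div_iff₀ hτ2]; linarith
  have h2θ : 1 < (2 : ℝ) ^ θ :=
    (Real.one_lt_rpow_iff_of_pos (by norm_num)).2 (Or.inl ⟨by norm_num, hθpos⟩)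
  set r : ℝ := ((2 : ℝ) ^ θ)⁻¹ with hr
  have hr0 : 0 < r := by positivity
  have hr1 : r < 1 := inv_lt_one_of_one_lt₀ h2θ
  have hr45 : r ≤ 4 / 5 := by
    have hcube : ((2 : ℝ) ^ (1/3 : ℝ)) ^ (3 : ℕ) = 2 := by
      rw [← Real.rpow_natCast ((2:ℝ) ^ (1/3 : ℝ)) 3, ← Real.rpow_mul (by norm_num)]
      norm_num
    have h54 : (5 / 4 : ℝ) ≤ (2 : ℝ) ^ (1/3 : ℝ) := by
      by_contra hlt
      push_neg at hlt
      have hnn : (0 : ℝ) ≤ (2 : ℝ) ^ (1/3 : ℝ) := Real.rpow_nonneg (by norm_num) _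
      have := pow_lt_pow_left₀ hlt hnn (by norm_num : (3:ℕ) ≠ 0)
      rw [hcube] at this
      norm_num at this
    have h2 : (5 / 4 : ℝ) ≤ (2 : ℝ) ^ θ :=
      h54.trans (Real.rpow_le_rpow_of_exponent_le (by norm_num) hθ3)
    rw [hr, show (4 / 5 : ℝ) = (5 / 4 : ℝ)⁻¹ by norm_num]
    exact inv_anti₀ (by norm_num) h2
  have hgeo10 : ∀ k : ℕ, ∑ l ∈ Finset.range N, r ^ (((k : ℤ) - l).natAbs) ≤ 10 := by
    intro k
    refine (georow hr0.le hr1 k N).trans ?_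
    rw [div_le_iff₀ (by linarith)]
    linarith
  have hC5pos : (0 : ℝ) < C₅ := by linarith
  have hC5θpos : (0 : ℝ) < C₅ ^ θ := Real.rpow_pos_of_pos hC5pos θ
  -- Step A
  have hA : ∀ k l, x k l ≤ (a k ^ s * b l ^ s * r ^ (((k : ℤ) - l).natAbs)) / C₅ ^ θ := by
    intro k l
    set d : ℕ := ((k : ℤ) - l).natAbs with hd
    rcases eq_or_lt_of_le (hx0 k l) with h0 | hxp
    · rw [← h0]
      exact div_nonneg (mul_nonneg (mul_nonneg (Real.rpow_nonneg (ha0 k) s)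
        (Real.rpow_nonneg (hb0 l) s)) (pow_nonneg hr0.le _)) hC5θpos.le
    · obtain ⟨hak, hbl⟩ := hpos k l hxp
      have hcon' := hcon k l hxp
      have hdpos : (0 : ℝ) < 2 ^ d := by positivity
      have h1 : x k l ^ (2 + τ) < 1 / C₅ * (a k * b l) ^ (1 + τ) / 2 ^ d :=
        (lt_div_iff₀ hdpos).2 hcon'
      have h2 : (x k l ^ (2 + τ)) ^ θ ≤ (1 / C₅ * (a k * b l) ^ (1 + τ) / 2 ^ d) ^ θ :=
        Real.rpow_le_rpow (Real.rpow_nonneg (hx0 k l) _) h1.le hθpos.le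
      have hxid : (x k l ^ (2 + τ)) ^ θ = x k l := by
        rw [← Real.rpow_mul (hx0 k l)]
        rw [show (2 + τ) * θ = 1 by rw [hθ]; field_simp]
        exact Real.rpow_one _
      have hab : (0 : ℝ) ≤ a k * b l := mul_nonneg (ha0 k) (hb0 l)
      have habp : (0 : ℝ) ≤ (a k * b l) ^ (1 + τ) := Real.rpow_nonneg hab _
      have e2d : ((2:ℝ) ^ d) ^ θ = ((2:ℝ) ^ θ) ^ d := by
        rw [← Real.rpow_natCast (2:ℝ) d, ← Real.rpow_mul (by norm_num), mul_comm,
          Real.rpow_mul (by norm_num), Real.rpow_natCast]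
      have hrhs : (1 / C₅ * (a k * b l) ^ (1 + τ) / 2 ^ d) ^ θ
          = (a k ^ s * b l ^ s * r ^ d) / C₅ ^ θ := by
        rw [show 1 / C₅ * (a k * b l) ^ (1 + τ) / 2 ^ d
            = (a k * b l) ^ (1 + τ) * (C₅⁻¹ * ((2:ℝ) ^ d)⁻¹) by ring]
        rw [Real.mul_rpow hak.le hbl.le]
        rw [Real.mul_rpow (mul_nonneg (Real.rpow_nonneg hak.le _)
          (Real.rpow_nonneg hbl.le _)) (by positivity)]
        rw [Real.mul_rpow (Real.rpow_nonneg hak.le _) (Real.rpow_nonneg hbl.le _)]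
        rw [← Real.rpow_mul hak.le, ← Real.rpow_mul hbl.le]
        rw [Real.mul_rpow (by positivity) (by positivity)]
        rw [Real.inv_rpow hC5pos.le, Real.inv_rpow (by positivity), e2d]
        rw [show (1 + τ) * θ = s from hs.symm, hr, inv_pow]
        ring
      rw [hxid, hrhs] at h2
      exact h2
  -- Step B : 1 ≤ S / C₅ ^ θ
  have hB : (1:ℝ) ≤ (∑ q ∈ Finset.range N ×ˢ Finset.range N,
      a q.1 ^ s * b q.2 ^ s * r ^ (((q.1 : ℤ) - q.2).natAbs)) / C₅ ^ θ := by
    rw [← hxs, Finset.sum_div]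
    exact Finset.sum_le_sum fun q _ => hA q.1 q.2
  -- bounds on ∑ (a k ^ s)^2
  have hasq : ∑ k ∈ Finset.range N, (a k ^ s) ^ 2 ≤ 1 := by
    rw [← has]
    refine Finset.sum_le_sum fun k hk => ?_
    rcases eq_or_lt_of_le (ha0 k) with h0 | hak
    · rw [← h0, ← Real.rpow_natCast (_ ^ s) 2, ← Real.rpow_mul le_rfl,
        Real.zero_rpow (by positivity)]
    · have hak1 : a k ≤ 1 := by
        rw [← has]
        exact Finset.single_le_sum (fun i _ => ha0 i) hk
      have : (a k ^ s) ^ (2:ℕ) = a k ^ (s * 2) := by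
        rw [← Real.rpow_natCast (a k ^ s) 2, ← Real.rpow_mul (ha0 k)]
        norm_num
      rw [this]
      calc a k ^ (s * 2) ≤ a k ^ (1:ℝ) :=
            Real.rpow_le_rpow_of_exponent_ge hak hak1 hs2
        _ = a k := Real.rpow_one _
  have hbsq : ∑ l ∈ Finset.range N, (b l ^ s) ^ 2 ≤ 1 := by
    rw [← hbs]
    refine Finset.sum_le_sum fun l hl => ?_
    rcases eq_or_lt_of_le (hb0 l) with h0 | hbl
    · rw [← h0, ← Real.rpow_natCast (_ ^ s) 2, ← Real.rpow_mul le_rfl,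
        Real.zero_rpow (by positivity)]
    · have hbl1 : b l ≤ 1 := by
        rw [← hbs]
        exact Finset.single_le_sum (fun i _ => hb0 i) hl
      have : (b l ^ s) ^ (2:ℕ) = b l ^ (s * 2) := by
        rw [← Real.rpow_natCast (b l ^ s) 2, ← Real.rpow_mul (hb0 l)]
        norm_num
      rw [this]
      calc b l ^ (s * 2) ≤ b l ^ (1:ℝ) :=
            Real.rpow_le_rpow_of_exponent_ge hbl hbl1 hs2
        _ = b l := Real.rpow_one _
  -- Step C : S ≤ 10
  have hS : ∑ q ∈ Finset.range N ×ˢ Finset.range N,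
      a q.1 ^ s * b q.2 ^ s * r ^ (((q.1 : ℤ) - q.2).natAbs) ≤ 10 := by
    have hterm : ∀ q ∈ Finset.range N ×ˢ Finset.range N,
        a q.1 ^ s * b q.2 ^ s * r ^ (((q.1 : ℤ) - q.2).natAbs) ≤
        ((a q.1 ^ s) ^ 2 * r ^ (((q.1 : ℤ) - q.2).natAbs)
          + (b q.2 ^ s) ^ 2 * r ^ (((q.1 : ℤ) - q.2).natAbs)) / 2 := by
      intro q _
      have h2ab := two_mul_le_add_sq (a q.1 ^ s) (b q.2 ^ s)
      have hrd : (0:ℝ) ≤ r ^ (((q.1 : ℤ) - q.2).natAbs) := pow_nonneg hr0.le _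
      nlinarith [mul_le_mul_of_nonneg_right h2ab hrd]
    have h1 : ∑ q ∈ Finset.range N ×ˢ Finset.range N,
        (a q.1 ^ s) ^ 2 * r ^ (((q.1 : ℤ) - q.2).natAbs) ≤ 10 := by
      rw [Finset.sum_product]
      calc ∑ k ∈ Finset.range N, ∑ l ∈ Finset.range N,
            (a k ^ s) ^ 2 * r ^ (((k : ℤ) - l).natAbs)
          = ∑ k ∈ Finset.range N, (a k ^ s) ^ 2 *
              ∑ l ∈ Finset.range N, r ^ (((k : ℤ) - l).natAbs) := by
            refine Finset.sum_congr rfl fun k _ => ?_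
            rw [Finset.mul_sum]
        _ ≤ ∑ k ∈ Finset.range N, (a k ^ s) ^ 2 * 10 := by
            refine Finset.sum_le_sum fun k _ => ?_
            exact mul_le_mul_of_nonneg_left (hgeo10 k) (sq_nonneg _)
        _ = (∑ k ∈ Finset.range N, (a k ^ s) ^ 2) * 10 := by
            rw [← Finset.sum_mul]
        _ ≤ 1 * 10 := by
            exact mul_le_mul_of_nonneg_right hasq (by norm_num)
        _ = 10 := by norm_num
    have h2 : ∑ q ∈ Finset.range N ×ˢ Finset.range N,
        (b q.2 ^ s) ^ 2 * r ^ (((q.1 : ℤ) - q.2).natAbs) ≤ 10 := by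
      rw [Finset.sum_product]
      rw [Finset.sum_comm]
      calc ∑ l ∈ Finset.range N, ∑ k ∈ Finset.range N,
            (b l ^ s) ^ 2 * r ^ (((k : ℤ) - l).natAbs)
          = ∑ l ∈ Finset.range N, (b l ^ s) ^ 2 *
              ∑ k ∈ Finset.range N, r ^ (((l : ℤ) - k).natAbs) := by
            refine Finset.sum_congr rfl fun l _ => ?_
            rw [Finset.mul_sum]
            refine Finset.sum_congr rfl fun k _ => ?_
            have hcomm : ((l : ℤ) - k).natAbs = ((k : ℤ) - l).natAbs := by omega
            rw [hcomm]
        _ ≤ ∑ l ∈ Finset.range N, (b l ^ s) ^ 2 * 10 := by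
            refine Finset.sum_le_sum fun l _ => ?_
            exact mul_le_mul_of_nonneg_left (hgeo10 l) (sq_nonneg _)
        _ = (∑ l ∈ Finset.range N, (b l ^ s) ^ 2) * 10 := by
            rw [← Finset.sum_mul]
        _ ≤ 1 * 10 := mul_le_mul_of_nonneg_right hbsq (by norm_num)
        _ = 10 := by norm_num
    calc ∑ q ∈ Finset.range N ×ˢ Finset.range N,
          a q.1 ^ s * b q.2 ^ s * r ^ (((q.1 : ℤ) - q.2).natAbs)
        ≤ ∑ q ∈ Finset.range N ×ˢ Finset.range N,
          ((a q.1 ^ s) ^ 2 * r ^ (((q.1 : ℤ) - q.2).natAbs)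
            + (b q.2 ^ s) ^ 2 * r ^ (((q.1 : ℤ) - q.2).natAbs)) / 2 :=
          Finset.sum_le_sum hterm
      _ = (∑ q ∈ Finset.range N ×ˢ Finset.range N,
            (a q.1 ^ s) ^ 2 * r ^ (((q.1 : ℤ) - q.2).natAbs)
          + ∑ q ∈ Finset.range N ×ˢ Finset.range N,
            (b q.2 ^ s) ^ 2 * r ^ (((q.1 : ℤ) - q.2).natAbs)) / 2 := by
          rw [← Finset.sum_add_distrib, Finset.sum_div]
      _ ≤ (10 + 10) / 2 := by linarith
      _ = 10 := by norm_num
  -- Step E : contradiction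
  have hfin : C₅ ^ θ ≤ 10 := by
    have h10 : (1:ℝ) ≤ 10 / C₅ ^ θ := by
      refine hB.trans ?_
      exact div_le_div_of_nonneg_right hS hC5θpos.le
    rw [le_div_iff₀ hC5θpos] at h10
    linarith
  have e1 : (C₅ ^ θ) ^ θ⁻¹ = C₅ := by
    rw [← Real.rpow_mul hC5pos.le, mul_inv_cancel₀ hθpos.ne', Real.rpow_one]
  have e2 : (C₅ ^ θ) ^ θ⁻¹ ≤ (10:ℝ) ^ θ⁻¹ :=
    Real.rpow_le_rpow hC5θpos.le hfin (inv_nonneg.2 hθpos.le)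
  have e3 : (10:ℝ) ^ θ⁻¹ ≤ (10:ℝ) ^ (3:ℝ) := by
    refine Real.rpow_le_rpow_of_exponent_le (by norm_num) ?_
    rw [hθinv]; linarith
  have e4 : (10:ℝ) ^ (3:ℝ) = 1000 := by
    rw [show (3:ℝ) = ((3:ℕ):ℝ) by norm_num, Real.rpow_natCast]
    norm_num
  rw [e1] at e2
  rw [e4] at e3
  linarith

/-! ### Constants -/

lemma C1_gt {τ : ℝ} (hτ : τ ∈ Set.Ioo (0 : ℝ) (1 / 100)) : 1 < C1 τ := by
  rw [C1, lt_div_iff₀ hτ.1]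
  have := hτ.2
  norm_num at this ⊢
  nlinarith

lemma C5_gt {τ : ℝ} (M : ℝ) (hτ : τ ∈ Set.Ioo (0 : ℝ) (1 / 100)) : 1000 < C5 τ M := by
  have h1 := C1_gt hτ
  have h3 : (1000 : ℝ) < C3 τ := by
    rw [C3]
    nlinarith [one_lt_pow₀ (n := 3) h1 (by norm_num)]
  exact h3.trans_le (le_max_left _ _)

lemma C6_nonneg (τ M : ℝ) : 0 ≤ C6 τ M := by
  have h4 : (0 : ℝ) ≤ C4 τ M := by rw [C4]; positivity
  exact h4.trans (le_max_left _ _)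

/-! ### Measure lemmas -/

lemma muSet_nonneg (mu : ℕ → ℝ) (h : ∀ n, 0 ≤ mu n) (S : Finset ℕ) : 0 ≤ muSet mu S :=
  Finset.sum_nonneg fun i _ => h i

lemma muEdges_nonneg (mu : ℕ → ℝ) (h : ∀ n, 0 ≤ mu n) (E : Finset (ℕ × ℕ)) :
    0 ≤ muEdges mu E :=
  Finset.sum_nonneg fun e _ => mul_nonneg (h _) (h _)

lemma muEdges_le_mul (mu : ℕ → ℝ) (h : ∀ n, 0 ≤ mu n) {E' : Finset (ℕ × ℕ)}
    {V' W' : Finset ℕ} (hsub : E' ⊆ V' ×ˢ W') :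
    muEdges mu E' ≤ muSet mu V' * muSet mu W' := by
  calc muEdges mu E' ≤ muEdges mu (V' ×ˢ W') :=
        Finset.sum_le_sum_of_subset_of_nonneg hsub fun e _ _ => mul_nonneg (h _) (h _)
    _ = muSet mu V' * muSet mu W' := by
        rw [muEdges, muSet, muSet, Finset.sum_product, Finset.sum_mul_sum]

lemma density_facts (G : GCDGraph) (hδ : 0 < G.density) :
    0 < muSet G.mu G.V ∧ 0 < muSet G.mu G.W ∧ 0 < muEdges G.mu G.E := by
  have hδ' : 0 < muEdges G.mu G.E / (muSet G.mu G.V * muSet G.mu G.W) := hδ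
  have hA0 := muSet_nonneg G.mu G.mu_nonneg G.V
  have hB0 := muSet_nonneg G.mu G.mu_nonneg G.W
  rcases div_pos_iff.1 hδ' with ⟨hE, hAB⟩ | ⟨-, hAB⟩
  · have hA : 0 < muSet G.mu G.V := by
      rcases hA0.lt_or_eq with h | h
      · exact h
      · exfalso; rw [← h, zero_mul] at hAB; exact lt_irrefl 0 hAB
    have hB : 0 < muSet G.mu G.W := by
      rcases hB0.lt_or_eq with h | h
      · exact h
      · exfalso; rw [← h, mul_zero] at hAB; exact lt_irrefl 0 hAB
    exact ⟨hA, hB, hE⟩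
  · exfalso; nlinarith

/-! ### Quality factor -/

noncomputable def Fac (τ : ℝ) (f g : ℕ → ℕ) (p : ℕ) : ℝ :=
  (p : ℝ) ^ (((f p : ℤ) - (g p : ℤ)).natAbs) *
    ((1 - (if f p = g p ∧ 1 ≤ f p then ((p : ℝ))⁻¹ else 0))⁻¹) ^ 2 *
    ((1 - (p : ℝ) ^ (-1 - τ / 4))⁻¹) ^ 3

lemma qualityRaw_eq (τ : ℝ) (mu : ℕ → ℝ) (V W : Finset ℕ) (E : Finset (ℕ × ℕ))
    (P : Finset ℕ) (f g : ℕ → ℕ) :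
    qualityRaw τ mu V W E P f g =
      densityRaw mu V W E ^ (2 + τ) * muSet mu V * muSet mu W * ∏ p ∈ P, Fac τ f g p := rfl

lemma Fac_pos {τ : ℝ} (hτ0 : 0 < τ) {p : ℕ} (hp : p.Prime) (f g : ℕ → ℕ) :
    0 < Fac τ f g p := by
  have hp2 : (2 : ℝ) ≤ p := by exact_mod_cast hp.two_le
  have h1 : (0 : ℝ) < (p : ℝ) ^ (((f p : ℤ) - (g p : ℤ)).natAbs) := pow_pos (by linarith) _
  have h2 : (0 : ℝ) < 1 - (if f p = g p ∧ 1 ≤ f p then ((p : ℝ))⁻¹ else 0) := by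
    split_ifs
    · have hinv : (p : ℝ)⁻¹ < 1 := inv_lt_one_of_one_lt₀ (by linarith)
      linarith
    · norm_num
  have h3 : (0 : ℝ) < 1 - (p : ℝ) ^ (-1 - τ / 4) := by
    have hlt : (p : ℝ) ^ (-1 - τ / 4) < 1 :=
      Real.rpow_lt_one_of_one_lt_of_neg (by linarith) (by linarith)
    linarith
  exact mul_pos (mul_pos h1 (pow_pos (inv_pos.2 h2) 2)) (pow_pos (inv_pos.2 h3) 3)

lemma Fac_ge {τ : ℝ} (hτ0 : 0 < τ) {p : ℕ} (hp : p.Prime) (f g : ℕ → ℕ) :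
    (2 : ℝ) ^ (((f p : ℤ) - (g p : ℤ)).natAbs) ≤ Fac τ f g p := by
  have hp2 : (2 : ℝ) ≤ p := by exact_mod_cast hp.two_le
  have h2' : (0 : ℝ) < 1 - (if f p = g p ∧ 1 ≤ f p then ((p : ℝ))⁻¹ else 0) := by
    split_ifs
    · have hinv : (p : ℝ)⁻¹ < 1 := inv_lt_one_of_one_lt₀ (by linarith)
      linarith
    · norm_num
  have h2le : 1 - (if f p = g p ∧ 1 ≤ f p then ((p : ℝ))⁻¹ else 0) ≤ 1 := by
    split_ifs
    · have : (0:ℝ) ≤ (p : ℝ)⁻¹ := by positivity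
      linarith
    · norm_num
  have h2 : 1 ≤ ((1 - (if f p = g p ∧ 1 ≤ f p then ((p : ℝ))⁻¹ else 0))⁻¹) := by
    rw [one_le_inv_iff₀]
    exact ⟨h2', h2le⟩
  have h3' : (0 : ℝ) < 1 - (p : ℝ) ^ (-1 - τ / 4) := by
    have hlt : (p : ℝ) ^ (-1 - τ / 4) < 1 :=
      Real.rpow_lt_one_of_one_lt_of_neg (by linarith) (by linarith)
    linarith
  have h3le : 1 - (p : ℝ) ^ (-1 - τ / 4) ≤ 1 := by
    have : (0:ℝ) ≤ (p : ℝ) ^ (-1 - τ / 4) := Real.rpow_nonneg (by linarith) _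
    linarith
  have h3 : 1 ≤ (1 - (p : ℝ) ^ (-1 - τ / 4))⁻¹ := by
    rw [one_le_inv_iff₀]
    exact ⟨h3', h3le⟩
  have h1 : (2 : ℝ) ^ (((f p : ℤ) - (g p : ℤ)).natAbs) ≤
      (p : ℝ) ^ (((f p : ℤ) - (g p : ℤ)).natAbs) :=
    pow_le_pow_left₀ (by norm_num) hp2 _
  calc (2 : ℝ) ^ (((f p : ℤ) - (g p : ℤ)).natAbs)
      ≤ (p : ℝ) ^ (((f p : ℤ) - (g p : ℤ)).natAbs) := h1
    _ = (p : ℝ) ^ (((f p : ℤ) - (g p : ℤ)).natAbs) * 1 * 1 := by ring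
    _ ≤ Fac τ f g p := by
        rw [Fac]
        have hpd : (0:ℝ) ≤ (p : ℝ) ^ (((f p : ℤ) - (g p : ℤ)).natAbs) := by positivity
        have e2 : (1:ℝ) ≤ ((1 - (if f p = g p ∧ 1 ≤ f p then ((p : ℝ))⁻¹ else 0))⁻¹) ^ 2 :=
          one_le_pow₀ h2
        have e3 : (1:ℝ) ≤ ((1 - (p : ℝ) ^ (-1 - τ / 4))⁻¹) ^ 3 :=
          one_le_pow₀ h3
        have := mul_le_mul (mul_le_mul le_rfl e2 (by norm_num) hpd) e3 (by norm_num)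
          (by positivity)
        simpa using this

lemma quality_pos {τ : ℝ} (hτ0 : 0 < τ) (G : GCDGraph) (hδ : 0 < G.density) :
    0 < quality τ G := by
  obtain ⟨hA, hB, -⟩ := density_facts G hδ
  have hPd : 0 < ∏ q ∈ G.P, Fac τ G.f G.g q :=
    Finset.prod_pos fun q hq => Fac_pos hτ0 (G.P_prime q hq) _ _
  have : quality τ G = densityRaw G.mu G.V G.W G.E ^ (2 + τ) * muSet G.mu G.V *
      muSet G.mu G.W * ∏ q ∈ G.P, Fac τ G.f G.g q := rfl
  rw [this]
  exact mul_pos (mul_pos (mul_pos (Real.rpow_pos_of_pos hδ _) hA) hB) hPd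

/-! ### Subgraph lemmas -/

lemma isSubgraph_refl (G : GCDGraph) : IsSubgraph G G :=
  ⟨rfl, subset_rfl, subset_rfl, subset_rfl, subset_rfl, fun _ _ => rfl, fun _ _ => rfl⟩

lemma isSubgraph_trans {G₂ G₁ G : GCDGraph} (h₂ : IsSubgraph G₂ G₁) (h₁ : IsSubgraph G₁ G) :
    IsSubgraph G₂ G := by
  obtain ⟨hmu2, hV2, hW2, hE2, hP2, hf2, hg2⟩ := h₂
  obtain ⟨hmu1, hV1, hW1, hE1, hP1, hf1, hg1⟩ := h₁
  refine ⟨hmu2.trans hmu1, hV2.trans hV1, hW2.trans hW1, hE2.trans hE1, hP1.trans hP2,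
    fun q hq => ?_, fun q hq => ?_⟩
  · rw [hf2 q (hP1 hq), hf1 q hq]
  · rw [hg2 q (hP1 hq), hg1 q hq]

lemma R_subset {G₁ G : GCDGraph} (h : IsSubgraph G₁ G) : R G₁ ⊆ R G := by
  obtain ⟨-, -, -, hE, hP, -, -⟩ := h
  rintro q ⟨hq, hqP, e, he, hdvd⟩
  exact ⟨hq, fun hmem => hqP (hP hmem), e, hE he, hdvd⟩

/-! ### Factorization lemmas -/

lemma exactPart_filter {S : Finset ℕ} (hS : ∀ v ∈ S, 0 < v) {p : ℕ} (hp : p.Prime) (k : ℕ) :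
    exactPart S p k = S.filter (fun v => v.factorization p = k) := by
  ext v
  simp only [exactPart, Finset.mem_filter]
  refine and_congr_right fun hv => ?_
  rw [Nat.Prime.pow_dvd_iff_le_factorization hp (hS v hv).ne',
      Nat.Prime.pow_dvd_iff_le_factorization hp (hS v hv).ne']
  omega

lemma factorization_lt_of_mem {S : Finset ℕ} (hS : ∀ v ∈ S, 0 < v) {p v : ℕ}
    (hp : p.Prime) (hv : v ∈ S) : v.factorization p < S.sup id + 1 := by
  have h1 : p ^ (v.factorization p) ∣ v := Nat.ordProj_dvd v p
  have h2 : p ^ v.factorization p ≤ v := Nat.le_of_dvd (hS v hv) h1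
  have h3 : v ≤ S.sup id := Finset.le_sup (f := id) hv
  have h4 : v.factorization p < 2 ^ v.factorization p := Nat.lt_two_pow_self
  have h5 : 2 ^ v.factorization p ≤ p ^ v.factorization p :=
    Nat.pow_le_pow_left hp.two_le _
  omega

lemma edgesAt_subset (G : GCDGraph) (p k l : ℕ) :
    edgesAt G p k l ⊆ exactPart G.V p k ×ˢ exactPart G.W p l := by
  intro e he
  obtain ⟨-, h1, h2⟩ := Finset.mem_filter.1 he
  exact Finset.mem_product.2 ⟨h1, h2⟩

lemma step_exists (τ M : ℝ) (hτ : τ ∈ Set.Ioo (0 : ℝ) (1 / 100)) (G : GCDGraph)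
    (hδ : 0 < G.density) {p : ℕ} (hpR : p ∈ R G) :
    ∃ G₁ : GCDGraph, IsSubgraph G₁ G ∧ G₁.P = insert p G.P ∧ 0 < G₁.density ∧
      quality τ G / C5 τ M ≤ quality τ G₁ := by
  obtain ⟨hp, hpP, -⟩ := hpR
  have hτ0 : 0 < τ := hτ.1
  have hτ1 : τ ≤ 1 := by have := hτ.2; norm_num at this; linarith
  have hC5 : (1000 : ℝ) < C5 τ M := C5_gt M hτ
  have hC5pos : (0 : ℝ) < C5 τ M := by linarith
  have hδ' : 0 < muEdges G.mu G.E / (muSet G.mu G.V * muSet G.mu G.W) := hδ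
  obtain ⟨hApos, hBpos, hmEpos⟩ := density_facts G hδ
  set N : ℕ := G.V.sup id + G.W.sup id + 1 with hN
  have hVmaps : ∀ v ∈ G.V, v.factorization p ∈ Finset.range N := fun v hv =>
    Finset.mem_range.2 (by
      have := factorization_lt_of_mem G.V_pos hp hv
      omega)
  have hWmaps : ∀ w ∈ G.W, w.factorization p ∈ Finset.range N := fun w hw =>
    Finset.mem_range.2 (by
      have := factorization_lt_of_mem G.W_pos hp hw
      omega)
  have hVfib : ∑ k ∈ Finset.range N, muSet G.mu (exactPart G.V p k) = muSet G.mu G.V := by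
    have hfib := Finset.sum_fiberwise_of_maps_to hVmaps G.mu
    calc ∑ k ∈ Finset.range N, muSet G.mu (exactPart G.V p k)
        = ∑ k ∈ Finset.range N, ∑ v ∈ G.V.filter (fun v => v.factorization p = k), G.mu v := by
          refine Finset.sum_congr rfl fun k _ => ?_
          rw [muSet, exactPart_filter G.V_pos hp]
      _ = muSet G.mu G.V := hfib
  have hWfib : ∑ l ∈ Finset.range N, muSet G.mu (exactPart G.W p l) = muSet G.mu G.W := by
    have hfib := Finset.sum_fiberwise_of_maps_to hWmaps G.mu
    calc ∑ l ∈ Finset.range N, muSet G.mu (exactPart G.W p l)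
        = ∑ l ∈ Finset.range N, ∑ w ∈ G.W.filter (fun w => w.factorization p = l), G.mu w := by
          refine Finset.sum_congr rfl fun l _ => ?_
          rw [muSet, exactPart_filter G.W_pos hp]
      _ = muSet G.mu G.W := hfib
  have hedgesAt : ∀ q : ℕ × ℕ, edgesAt G p q.1 q.2 =
      G.E.filter (fun e => (e.1.factorization p, e.2.factorization p) = q) := by
    intro q
    ext e
    simp only [edgesAt, Finset.mem_filter, exactPart_filter G.V_pos hp,
      exactPart_filter G.W_pos hp]
    constructor
    · rintro ⟨he, ⟨-, h1⟩, ⟨-, h2⟩⟩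
      exact ⟨he, by rw [h1, h2]⟩
    · rintro ⟨he, hq⟩
      have heVW := Finset.mem_product.1 (G.E_sub he)
      exact ⟨he, ⟨heVW.1, (Prod.ext_iff.1 hq).1⟩, ⟨heVW.2, (Prod.ext_iff.1 hq).2⟩⟩
  have hEfib : ∑ q ∈ Finset.range N ×ˢ Finset.range N,
      muEdges G.mu (edgesAt G p q.1 q.2) = muEdges G.mu G.E := by
    have hmaps : ∀ e ∈ G.E,
        (e.1.factorization p, e.2.factorization p) ∈ Finset.range N ×ˢ Finset.range N := by
      intro e he
      have heVW := Finset.mem_product.1 (G.E_sub he)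
      exact Finset.mem_product.2 ⟨hVmaps _ heVW.1, hWmaps _ heVW.2⟩
    have hfib := Finset.sum_fiberwise_of_maps_to hmaps (fun e => G.mu e.1 * G.mu e.2)
    calc ∑ q ∈ Finset.range N ×ˢ Finset.range N, muEdges G.mu (edgesAt G p q.1 q.2)
        = ∑ q ∈ Finset.range N ×ˢ Finset.range N,
            ∑ e ∈ G.E.filter (fun e => (e.1.factorization p, e.2.factorization p) = q),
              G.mu e.1 * G.mu e.2 := by
          refine Finset.sum_congr rfl fun q _ => ?_
          rw [muEdges, hedgesAt q]
      _ = muEdges G.mu G.E := hfib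
  -- apply the pigeonhole lemma
  obtain ⟨k, l, hxpos, hkey⟩ := pigeon hτ0 hτ1 hC5 N
    (fun k l => muEdges G.mu (edgesAt G p k l) / muEdges G.mu G.E)
    (fun k => muSet G.mu (exactPart G.V p k) / muSet G.mu G.V)
    (fun l => muSet G.mu (exactPart G.W p l) / muSet G.mu G.W)
    (fun k l => div_nonneg (muEdges_nonneg G.mu G.mu_nonneg _) hmEpos.le)
    (fun k => div_nonneg (muSet_nonneg G.mu G.mu_nonneg _) hApos.le)
    (fun l => div_nonneg (muSet_nonneg G.mu G.mu_nonneg _) hBpos.le)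
    (by
      intro k l hx
      have he1 : 0 < muEdges G.mu (edgesAt G p k l) := by
        have h := mul_pos hx hmEpos
        rwa [div_mul_cancel₀ _ hmEpos.ne'] at h
      have hle := muEdges_le_mul G.mu G.mu_nonneg (edgesAt_subset G p k l)
      have hab : 0 < muSet G.mu (exactPart G.V p k) * muSet G.mu (exactPart G.W p l) :=
        lt_of_lt_of_le he1 hle
      have ha0 := muSet_nonneg G.mu G.mu_nonneg (exactPart G.V p k)
      have hb0 := muSet_nonneg G.mu G.mu_nonneg (exactPart G.W p l)
      have ha : 0 < muSet G.mu (exactPart G.V p k) := by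
        rcases ha0.lt_or_eq with h | h
        · exact h
        · exfalso; rw [← h, zero_mul] at hab; exact lt_irrefl 0 hab
      have hb : 0 < muSet G.mu (exactPart G.W p l) := by
        rcases hb0.lt_or_eq with h | h
        · exact h
        · exfalso; rw [← h, mul_zero] at hab; exact lt_irrefl 0 hab
      exact ⟨div_pos ha hApos, div_pos hb hBpos⟩)
    (by rw [← Finset.sum_div, hEfib, div_self hmEpos.ne'])
    (by rw [← Finset.sum_div, hVfib, div_self hApos.ne'])
    (by rw [← Finset.sum_div, hWfib, div_self hBpos.ne'])
  -- the chosen subgraph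
  have he1 : 0 < muEdges G.mu (edgesAt G p k l) := by
    have h := mul_pos hxpos hmEpos
    rwa [div_mul_cancel₀ _ hmEpos.ne'] at h
  have hle1 := muEdges_le_mul G.mu G.mu_nonneg (edgesAt_subset G p k l)
  have hab' : 0 < muSet G.mu (exactPart G.V p k) * muSet G.mu (exactPart G.W p l) :=
    lt_of_lt_of_le he1 hle1
  have ha' : 0 < muSet G.mu (exactPart G.V p k) := by
    rcases (muSet_nonneg G.mu G.mu_nonneg _).lt_or_eq with h | h
    · exact h
    · exfalso; rw [← h, zero_mul] at hab'; exact lt_irrefl 0 hab'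
  have hb' : 0 < muSet G.mu (exactPart G.W p l) := by
    rcases (muSet_nonneg G.mu G.mu_nonneg _).lt_or_eq with h | h
    · exact h
    · exfalso; rw [← h, mul_zero] at hab'; exact lt_irrefl 0 hab'
  refine ⟨⟨G.mu, G.mu_nonneg, exactPart G.V p k, exactPart G.W p l,
    fun v hv => G.V_pos v (Finset.mem_filter.1 hv).1,
    fun w hw => G.W_pos w (Finset.mem_filter.1 hw).1,
    edgesAt G p k l, edgesAt_subset G p k l, insert p G.P, ?_,
    Function.update G.f p k, Function.update G.g p l, ?_, ?_, ?_⟩, ?_, rfl, ?_, ?_⟩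
  · -- P_prime
    intro q hq
    rcases Finset.mem_insert.1 hq with h | h
    · exact h ▸ hp
    · exact G.P_prime q h
  · -- f_dvd
    intro q hq v hv
    rcases Finset.mem_insert.1 hq with h | h
    · subst h
      rw [Function.update_self]
      exact ((Finset.mem_filter.1 hv).2).1
    · rw [Function.update_of_ne (fun hqp => hpP (by rw [← hqp]; exact h))]
      exact G.f_dvd q h v (Finset.mem_filter.1 hv).1
  · -- g_dvd
    intro q hq w hw
    rcases Finset.mem_insert.1 hq with h | h
    · subst h
      rw [Function.update_self]
      exact ((Finset.mem_filter.1 hw).2).1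
    · rw [Function.update_of_ne (fun hqp => hpP (by rw [← hqp]; exact h))]
      exact G.g_dvd q h w (Finset.mem_filter.1 hw).1
  · -- gcd_exact
    intro q hq e he
    have heE : e ∈ G.E := (Finset.mem_filter.1 he).1
    rcases Finset.mem_insert.1 hq with h | h
    · subst h
      rw [Function.update_self, Function.update_self]
      obtain ⟨-, hv, hw⟩ := Finset.mem_filter.1 he
      obtain ⟨-, hv1, hv2⟩ := Finset.mem_filter.1 hv
      obtain ⟨-, hw1, hw2⟩ := Finset.mem_filter.1 hw
      constructor
      · exact Nat.dvd_gcd ((pow_dvd_pow q (min_le_left k l)).trans hv1)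
          ((pow_dvd_pow q (min_le_right k l)).trans hw1)
      · intro hdvd
        rcases le_total k l with hkl | hkl
        · rw [min_eq_left hkl] at hdvd
          exact hv2 (hdvd.trans (Nat.gcd_dvd_left _ _))
        · rw [min_eq_right hkl] at hdvd
          exact hw2 (hdvd.trans (Nat.gcd_dvd_right _ _))
    · have hqp : q ≠ p := fun hqp => hpP (hqp ▸ h)
      rw [Function.update_of_ne hqp, Function.update_of_ne hqp]
      exact G.gcd_exact q h e heE
  · -- IsSubgraph
    exact ⟨rfl, Finset.filter_subset _ _, Finset.filter_subset _ _, Finset.filter_subset _ _,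
      Finset.subset_insert _ _,
      fun q hq => Function.update_of_ne (fun h => hpP (by rw [← h]; exact hq)) _ _,
      fun q hq => Function.update_of_ne (fun h => hpP (by rw [← h]; exact hq)) _ _⟩
  · -- density positive
    exact div_pos he1 (mul_pos ha' hb')
  · -- quality bound
    have hPdpos : 0 < ∏ q ∈ G.P, Fac τ G.f G.g q :=
      Finset.prod_pos fun q hq => Fac_pos hτ0 (G.P_prime q hq) _ _
    have hDpos : (0:ℝ) < (2:ℝ) ^ (((k : ℤ) - l).natAbs) := by positivity
    have hprod : ∏ q ∈ insert p G.P,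
          Fac τ (Function.update G.f p k) (Function.update G.g p l) q
        = Fac τ (Function.update G.f p k) (Function.update G.g p l) p *
          ∏ q ∈ G.P, Fac τ G.f G.g q := by
      rw [Finset.prod_insert hpP]
      congr 1
      refine Finset.prod_congr rfl fun q hq => ?_
      have hqp : q ≠ p := fun h => hpP (by rw [← h]; exact hq)
      rw [Fac, Fac, Function.update_of_ne hqp, Function.update_of_ne hqp]
    have hFacD : (2:ℝ) ^ (((k : ℤ) - l).natAbs) ≤
        Fac τ (Function.update G.f p k) (Function.update G.g p l) p := by
      have h := Fac_ge hτ0 hp (Function.update G.f p k) (Function.update G.g p l)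
      rwa [Function.update_self, Function.update_self] at h
    -- density-measure identities
    have hdG : densityRaw G.mu G.V G.W G.E ^ (2 + τ) * muSet G.mu G.V * muSet G.mu G.W
        = muEdges G.mu G.E ^ (2 + τ) / (muSet G.mu G.V * muSet G.mu G.W) ^ (1 + τ) := by
      rw [densityRaw, Real.div_rpow (muEdges_nonneg G.mu G.mu_nonneg _)
        (mul_nonneg hApos.le hBpos.le)]
      rw [show (2:ℝ) + τ = (1 + τ) + 1 by ring]
      rw [Real.rpow_add_one (mul_pos hApos hBpos).ne' (1 + τ)]
      have hne1 : (muSet G.mu G.V * muSet G.mu G.W) ^ (1 + τ) ≠ 0 :=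
        (Real.rpow_pos_of_pos (mul_pos hApos hBpos) _).ne'
      field_simp
    have hd1 : densityRaw G.mu (exactPart G.V p k) (exactPart G.W p l) (edgesAt G p k l)
          ^ (2 + τ) * muSet G.mu (exactPart G.V p k) * muSet G.mu (exactPart G.W p l)
        = muEdges G.mu (edgesAt G p k l) ^ (2 + τ) /
          (muSet G.mu (exactPart G.V p k) * muSet G.mu (exactPart G.W p l)) ^ (1 + τ) := by
      rw [densityRaw, Real.div_rpow (muEdges_nonneg G.mu G.mu_nonneg _) hab'.le]
      rw [show (2:ℝ) + τ = (1 + τ) + 1 by ring]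
      rw [Real.rpow_add_one hab'.ne' (1 + τ)]
      have hne1 : (muSet G.mu (exactPart G.V p k) * muSet G.mu (exactPart G.W p l))
          ^ (1 + τ) ≠ 0 := (Real.rpow_pos_of_pos hab' _).ne'
      field_simp
    -- core inequality from hkey
    have hcore : muEdges G.mu G.E ^ (2 + τ) / (muSet G.mu G.V * muSet G.mu G.W) ^ (1 + τ)
          / C5 τ M
        ≤ muEdges G.mu (edgesAt G p k l) ^ (2 + τ) /
          (muSet G.mu (exactPart G.V p k) * muSet G.mu (exactPart G.W p l)) ^ (1 + τ) *
          (2:ℝ) ^ (((k : ℤ) - l).natAbs) := by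
      have h1 : (muSet G.mu (exactPart G.V p k) / muSet G.mu G.V *
            (muSet G.mu (exactPart G.W p l) / muSet G.mu G.W)) ^ (1 + τ)
          = (muSet G.mu (exactPart G.V p k) * muSet G.mu (exactPart G.W p l)) ^ (1 + τ) /
            (muSet G.mu G.V * muSet G.mu G.W) ^ (1 + τ) := by
        rw [div_mul_div_comm, Real.div_rpow hab'.le (mul_nonneg hApos.le hBpos.le)]
      have h2 : (muEdges G.mu (edgesAt G p k l) / muEdges G.mu G.E) ^ (2 + τ)
          = muEdges G.mu (edgesAt G p k l) ^ (2 + τ) / muEdges G.mu G.E ^ (2 + τ) :=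
        Real.div_rpow he1.le hmEpos.le (2 + τ)
      rw [h1, h2] at hkey
      have hαpos : (0:ℝ) < (muSet G.mu (exactPart G.V p k) *
          muSet G.mu (exactPart G.W p l)) ^ (1 + τ) := Real.rpow_pos_of_pos hab' _
      have hβpos : (0:ℝ) < (muSet G.mu G.V * muSet G.mu G.W) ^ (1 + τ) :=
        Real.rpow_pos_of_pos (mul_pos hApos hBpos) _
      have hupos : (0:ℝ) < muEdges G.mu (edgesAt G p k l) ^ (2 + τ) :=
        Real.rpow_pos_of_pos he1 _
      have hUpos : (0:ℝ) < muEdges G.mu G.E ^ (2 + τ) := Real.rpow_pos_of_pos hmEpos _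
      rw [div_div, div_mul_eq_mul_div, div_le_div_iff₀ (by positivity) hαpos]
      have hclear := mul_le_mul_of_nonneg_left hkey
        (show (0:ℝ) ≤ C5 τ M * (muSet G.mu G.V * muSet G.mu G.W) ^ (1 + τ) *
          muEdges G.mu G.E ^ (2 + τ) by positivity)
      have lhs_eq : C5 τ M * (muSet G.mu G.V * muSet G.mu G.W) ^ (1 + τ) *
            muEdges G.mu G.E ^ (2 + τ) *
            (1 / C5 τ M * ((muSet G.mu (exactPart G.V p k) *
              muSet G.mu (exactPart G.W p l)) ^ (1 + τ) /
              (muSet G.mu G.V * muSet G.mu G.W) ^ (1 + τ)))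
          = (muSet G.mu (exactPart G.V p k) * muSet G.mu (exactPart G.W p l)) ^ (1 + τ) *
            muEdges G.mu G.E ^ (2 + τ) := by
        field_simp
      have rhs_eq : C5 τ M * (muSet G.mu G.V * muSet G.mu G.W) ^ (1 + τ) *
            muEdges G.mu G.E ^ (2 + τ) *
            (muEdges G.mu (edgesAt G p k l) ^ (2 + τ) / muEdges G.mu G.E ^ (2 + τ) *
              (2:ℝ) ^ (((k : ℤ) - l).natAbs))
          = C5 τ M * (muSet G.mu G.V * muSet G.mu G.W) ^ (1 + τ) *
            (muEdges G.mu (edgesAt G p k l) ^ (2 + τ) *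
              (2:ℝ) ^ (((k : ℤ) - l).natAbs)) := by
        field_simp
      rw [lhs_eq, rhs_eq] at hclear
      linear_combination hclear
    -- put everything together
    have hq1pos : (0:ℝ) ≤ muEdges G.mu (edgesAt G p k l) ^ (2 + τ) /
        (muSet G.mu (exactPart G.V p k) * muSet G.mu (exactPart G.W p l)) ^ (1 + τ) := by
      positivity
    calc quality τ G / C5 τ M
        = (muEdges G.mu G.E ^ (2 + τ) / (muSet G.mu G.V * muSet G.mu G.W) ^ (1 + τ)
            / C5 τ M) * ∏ q ∈ G.P, Fac τ G.f G.g q := by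
          rw [show quality τ G = densityRaw G.mu G.V G.W G.E ^ (2 + τ) * muSet G.mu G.V *
            muSet G.mu G.W * ∏ q ∈ G.P, Fac τ G.f G.g q from rfl, hdG]
          ring
      _ ≤ (muEdges G.mu (edgesAt G p k l) ^ (2 + τ) /
            (muSet G.mu (exactPart G.V p k) * muSet G.mu (exactPart G.W p l)) ^ (1 + τ) *
            (2:ℝ) ^ (((k : ℤ) - l).natAbs)) * ∏ q ∈ G.P, Fac τ G.f G.g q :=
          mul_le_mul_of_nonneg_right hcore hPdpos.le
      _ ≤ (muEdges G.mu (edgesAt G p k l) ^ (2 + τ) /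
            (muSet G.mu (exactPart G.V p k) * muSet G.mu (exactPart G.W p l)) ^ (1 + τ) *
            Fac τ (Function.update G.f p k) (Function.update G.g p l) p) *
            ∏ q ∈ G.P, Fac τ G.f G.g q :=
          mul_le_mul_of_nonneg_right (mul_le_mul_of_nonneg_left hFacD hq1pos) hPdpos.le
      _ = _ := by
          show _ = densityRaw G.mu (exactPart G.V p k) (exactPart G.W p l)
              (edgesAt G p k l) ^ (2 + τ) * muSet G.mu (exactPart G.V p k) *
              muSet G.mu (exactPart G.W p l) *
              ∏ q ∈ insert p G.P,
                Fac τ (Function.update G.f p k) (Function.update G.g p l) q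
          rw [hprod, hd1]
          ring


/-! ### Small primes of a graph -/

open Classical in
noncomputable def smallR (τ M : ℝ) (G : GCDGraph) : Finset ℕ :=
  (Finset.range (Nat.floor (C6 τ M) + 1)).filter
    (fun p => p ∈ R G ∧ (p : ℝ) ≤ C6 τ M)

lemma mem_smallR {τ M : ℝ} {G : GCDGraph} {p : ℕ} :
    p ∈ smallR τ M G ↔ p ∈ R G ∧ (p : ℝ) ≤ C6 τ M := by
  classical
  rw [smallR]
  simp only [Finset.mem_filter, Finset.mem_range]
  constructor
  · rintro ⟨-, h⟩; exact h
  · rintro ⟨h1, h2⟩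
    exact ⟨Nat.lt_succ_of_le (Nat.le_floor h2), h1, h2⟩

lemma card_smallR_le (τ M : ℝ) (G : GCDGraph) :
    ((smallR τ M G).card : ℝ) ≤ C6 τ M := by
  have hsub : smallR τ M G ⊆ Finset.Icc 2 (Nat.floor (C6 τ M)) := by
    intro q hq
    obtain ⟨hqR, hqle⟩ := mem_smallR.1 hq
    exact Finset.mem_Icc.2 ⟨hqR.1.two_le, Nat.le_floor hqle⟩
  have h1 : (smallR τ M G).card ≤ Nat.floor (C6 τ M) := by
    have h2 := Finset.card_le_card hsub
    rw [Nat.card_Icc] at h2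
    omega
  calc ((smallR τ M G).card : ℝ) ≤ (Nat.floor (C6 τ M) : ℝ) := by exact_mod_cast h1
    _ ≤ C6 τ M := Nat.floor_le (C6_nonneg τ M)

/-! ### Main induction -/

lemma main_aux (τ M : ℝ) (hτ : τ ∈ Set.Ioo (0 : ℝ) (1 / 100)) :
    ∀ n : ℕ, ∀ G : GCDGraph, 0 < G.density → (smallR τ M G).card ≤ n →
    ∃ G' : GCDGraph, IsSubgraph G' G ∧ 0 < G'.density ∧
      (↑G'.P : Set ℕ) ⊆ ↑G.P ∪ (R G ∩ {p : ℕ | (p : ℝ) ≤ C6 τ M}) ∧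
      (∀ p ∈ R G', C6 τ M < (p : ℝ)) ∧
      quality τ G / C5 τ M ^ n ≤ quality τ G' := by
  intro n
  induction n with
  | zero =>
    intro G hδ hcard
    have hempty : smallR τ M G = ∅ := Finset.card_eq_zero.1 (Nat.le_zero.1 hcard)
    refine ⟨G, isSubgraph_refl G, hδ, fun q hq => Or.inl hq, ?_, by simp⟩
    intro q hq
    by_contra hle
    push_neg at hle
    have : q ∈ smallR τ M G := mem_smallR.2 ⟨hq, hle⟩
    rw [hempty] at this
    exact absurd this (Finset.notMem_empty q)
  | succ n ih =>
    intro G hδ hcard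
    by_cases hemp : smallR τ M G = ∅
    · refine ⟨G, isSubgraph_refl G, hδ, fun q hq => Or.inl hq, ?_, ?_⟩
      · intro q hq
        by_contra hle
        push_neg at hle
        have : q ∈ smallR τ M G := mem_smallR.2 ⟨hq, hle⟩
        rw [hemp] at this
        exact absurd this (Finset.notMem_empty q)
      · have hC5 := C5_gt M hτ
        have h1 : (1 : ℝ) ≤ C5 τ M ^ (n + 1) := one_le_pow₀ (by linarith)
        exact div_le_self (quality_pos hτ.1 G hδ).le h1
    · obtain ⟨p, hp⟩ := Finset.nonempty_of_ne_empty hemp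
      obtain ⟨hpR, hple⟩ := mem_smallR.1 hp
      obtain ⟨G₁, hsub₁, hP₁, hδ₁, hq₁⟩ := step_exists τ M hτ G hδ hpR
      have hcard₁ : (smallR τ M G₁).card ≤ n := by
        have hsub' : smallR τ M G₁ ⊆ (smallR τ M G).erase p := by
          intro q hq
          obtain ⟨hqR, hqle⟩ := mem_smallR.1 hq
          have hqRG : q ∈ R G := R_subset hsub₁ hqR
          have hqne : q ≠ p := by
            intro h
            subst h
            exact hqR.2.1 (by rw [hP₁]; exact Finset.mem_insert_self q G.P)
          exact Finset.mem_erase.2 ⟨hqne, mem_smallR.2 ⟨hqRG, hqle⟩⟩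
        have h2 := Finset.card_le_card hsub'
        rw [Finset.card_erase_of_mem hp] at h2
        omega
      obtain ⟨G', hsub', hδ', hP', hR', hq'⟩ := ih G₁ hδ₁ hcard₁
      refine ⟨G', isSubgraph_trans hsub' hsub₁, hδ', ?_, hR', ?_⟩
      · intro q hq
        rcases hP' hq with hq1 | hq2
        · rw [hP₁] at hq1
          rcases Finset.mem_insert.1 hq1 with h | h
          · exact Or.inr ⟨by rw [h]; exact hpR, by rw [h]; exact hple⟩
          · exact Or.inl h
        · exact Or.inr ⟨R_subset hsub₁ hq2.1, hq2.2⟩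
      · have hC5 := C5_gt M hτ
        have hC5pos : (0 : ℝ) < C5 τ M := by linarith
        calc quality τ G / C5 τ M ^ (n + 1)
            = (quality τ G / C5 τ M) / C5 τ M ^ n := by
              rw [div_div, pow_succ, mul_comm]
          _ ≤ quality τ G₁ / C5 τ M ^ n :=
              div_le_div_of_nonneg_right hq₁ (pow_pos hC5pos n).le
          _ ≤ quality τ G' := hq'

end Aux

/-- Bounded quality loss for small primes (`SmallPrimes`). -/
theorem small_primes_bounded_loss (τ M : ℝ) (hτ : τ ∈ Set.Ioo (0 : ℝ) (1 / 100)) (hM : 2 ≤ M)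
    (G : GCDGraph) (hδ : 0 < G.density) :
    ∃ G' : GCDGraph, IsSubgraph G' G ∧ 0 < G'.density ∧
      (↑G'.P : Set ℕ) ⊆ ↑G.P ∪ (R G ∩ {p : ℕ | (p : ℝ) ≤ C6 τ M}) ∧
      (∀ p ∈ R G', C6 τ M < (p : ℝ)) ∧
      quality τ G / C7 τ M ≤ quality τ G' := by
  obtain ⟨G', hsub, hδ', hP', hR', hq'⟩ :=
    main_aux τ M hτ ((smallR τ M G).card) G hδ le_rfl
  refine ⟨G', hsub, hδ', hP', hR', le_trans ?_ hq'⟩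
  have hq0 : 0 ≤ quality τ G := (quality_pos hτ.1 G hδ).le
  have hC5 : (1000 : ℝ) < C5 τ M := C5_gt M hτ
  have hpowpos : 0 < C5 τ M ^ (smallR τ M G).card := pow_pos (by linarith) _
  have hle : C5 τ M ^ (smallR τ M G).card ≤ C7 τ M := by
    rw [C7, ← Real.rpow_natCast (C5 τ M)]
    exact Real.rpow_le_rpow_of_exponent_le (by linarith) (card_smallR_le τ M G)
  have hC7pos : 0 < C7 τ M := lt_of_lt_of_le hpowpos hle
  rw [div_le_div_iff₀ hC7pos hpowpos]
  exact mul_le_mul_of_nonneg_left hle hq0
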